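/- Let R be a commutative ring with total quotient ring K = T(R), and let n be a positive integer. Let A_K = K[ε₁,…,εₙ] = K[T₁,…,Tₙ]/(T₁²,…,Tₙ²) with εᵢ the image of Tᵢ, and let A_R be the image of R[T₁,…,Tₙ] in A_K. Then a polynomial F ∈ A_K[X] satisfies F(a) ∈ A_R for all a ∈ A_R if and only if F(x + Σᵢ eᵢεᵢ) ∈ A_R for all x ∈ R and all choices e₁,…,eₙ ∈ {0,1}. That is, the subset R + Σᵢ{0,1}εᵢ is polynomially dense in R[ε₁,…,εₙ]. -/

import Mathlib

open Polynomial

/-- The ring of `n`-hyper-dual numbers `K[ε₁,…,εₙ] = K[T₁,…,Tₙ]/(T₁²,…,Tₙ²)`. -/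
abbrev HyperDual (K : Type*) [CommRing K] (n : ℕ) : Type _ :=
  MvPolynomial (Fin n) K ⧸
    Ideal.span (Set.range fun i : Fin n => (MvPolynomial.X i : MvPolynomial (Fin n) K) ^ 2)

/-- The image `εᵢ` of `Tᵢ` in `K[ε₁,…,εₙ]`. -/
noncomputable def HyperDual.eps (K : Type*) [CommRing K] (n : ℕ) (i : Fin n) :
    HyperDual K n :=
  Ideal.Quotient.mk _ (MvPolynomial.X i)

/-- The coefficientwise inclusion `K → K[ε₁,…,εₙ]`. -/
noncomputable def HyperDual.C (K : Type*) [CommRing K] (n : ℕ) : K →+* HyperDual K n :=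
  (Ideal.Quotient.mk _).comp MvPolynomial.C

/-- The subring `A_R = R[ε₁,…,εₙ]` of `K[ε₁,…,εₙ]`: the image of `R[T₁,…,Tₙ]`. -/
noncomputable def HyperDual.baseRange (R : Type*) [CommRing R] (n : ℕ) :
    Subring (HyperDual (FractionRing R) n) :=
  ((Ideal.Quotient.mk _ : MvPolynomial (Fin n) (FractionRing R) →+* HyperDual (FractionRing R) n).comp
    (MvPolynomial.map (algebraMap R (FractionRing R)))).range

set_option maxHeartbeats 1000000
set_option synthInstance.maxHeartbeats 400000

section General
variable {A : Type*} [CommRing A]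

lemma sq_zero_add_pow (u y : A) (hu : u * u = 0) (k : ℕ) :
    (u + y) ^ (k + 1) = y ^ (k + 1) + ((k + 1 : ℕ) : A) * (u * y ^ k) := by
  rw [add_pow, Finset.sum_range_succ', Finset.sum_range_succ']
  have h0 : ∀ i, u ^ (i + 2) = 0 := fun i => by
    have : u ^ (i + 2) = u * u * u ^ i := by ring
    rw [this, hu, zero_mul]
  have : ∀ i ∈ Finset.range k,
      u ^ (i + 1 + 1) * y ^ (k + 1 - (i + 1 + 1)) * ((k+1).choose (i + 1 + 1) : A) = 0 := by
    intro i _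
    rw [show i + 1 + 1 = i + 2 by ring, h0, zero_mul, zero_mul]
  rw [Finset.sum_eq_zero this]
  simp [Nat.choose_one_right]
  ring

lemma sum_pow_of_sq_zero {ι : Type*} [DecidableEq ι] (x : ι → A) :
    ∀ s : Finset ι, (∀ i ∈ s, x i * x i = 0) → ∀ k : ℕ,
      (∑ i ∈ s, x i) ^ k =
        ∑ B ∈ s.powersetCard k, (k.factorial : A) * ∏ i ∈ B, x i := by
  intro s
  induction s using Finset.induction_on with
  | empty =>
      intro _ k
      cases k with
      | zero => simp
      | succ k => rw [Finset.powersetCard_eq_empty.mpr (by simp)]; simp [zero_pow]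
  | insert a s ha ih =>
      intro hsq k
      have hxa : x a * x a = 0 := hsq a (Finset.mem_insert_self _ _)
      have ih' := ih fun i hi => hsq i (Finset.mem_insert_of_mem hi)
      cases k with
      | zero => simp
      | succ k =>
        have hdisj : Disjoint (s.powersetCard (k+1)) ((s.powersetCard k).image (insert a)) := by
          rw [Finset.disjoint_left]
          intro t ht ht'
          obtain ⟨B, hB, rfl⟩ := Finset.mem_image.mp ht'
          have : insert a B ⊆ s := (Finset.mem_powersetCard.mp ht).1
          exact ha (this (Finset.mem_insert_self _ _))
        have hinj : ∀ B ∈ s.powersetCard k, ∀ B' ∈ s.powersetCard k,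
            insert a B = insert a B' → B = B' := by
          intro B hB B' hB' h
          have haB : a ∉ B := fun h' => ha ((Finset.mem_powersetCard.mp hB).1 h')
          have haB' : a ∉ B' := fun h' => ha ((Finset.mem_powersetCard.mp hB').1 h')
          rw [← Finset.erase_insert haB, ← Finset.erase_insert haB', h]
        rw [Finset.sum_insert ha, sq_zero_add_pow _ _ hxa, ih' (k+1), ih' k,
          Finset.powersetCard_succ_insert ha, Finset.sum_union hdisj,
          Finset.sum_image hinj, Finset.mul_sum, Finset.mul_sum]
        congr 1
        refine Finset.sum_congr rfl fun B hB => ?_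
        have haB : a ∉ B := fun h' => ha ((Finset.mem_powersetCard.mp hB).1 h')
        rw [Finset.prod_insert haB]
        push_cast [Nat.factorial_succ]
        ring

end General

section HD
variable (K : Type*) [CommRing K] (n : ℕ)

lemma HyperDual.eps_mul_self (i : Fin n) :
    HyperDual.eps K n i * HyperDual.eps K n i = 0 := by
  have h : (Ideal.Quotient.mk _ ((MvPolynomial.X i : MvPolynomial (Fin n) K) ^ 2) :
      HyperDual K n) = 0 :=
    Ideal.Quotient.eq_zero_iff_mem.mpr (Ideal.subset_span ⟨i, rfl⟩)
  rw [HyperDual.eps, ← map_mul, ← pow_two]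
  exact h

noncomputable def HyperDual.epsP (T : Finset (Fin n)) : HyperDual K n :=
  ∏ i ∈ T, HyperDual.eps K n i

lemma HyperDual.epsP_empty : HyperDual.epsP K n ∅ = 1 := Finset.prod_empty

lemma HyperDual.epsP_mul_of_disjoint {T V : Finset (Fin n)} (h : Disjoint T V) :
    HyperDual.epsP K n T * HyperDual.epsP K n V = HyperDual.epsP K n (T ∪ V) :=
  (Finset.prod_union h).symm

lemma HyperDual.epsP_mul_of_not_disjoint {T V : Finset (Fin n)} (h : ¬ Disjoint T V) :
    HyperDual.epsP K n T * HyperDual.epsP K n V = 0 := by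
  obtain ⟨i, hiT, hiV⟩ := Finset.not_disjoint_iff.mp h
  rw [HyperDual.epsP, HyperDual.epsP, ← Finset.mul_prod_erase _ _ hiT,
    ← Finset.mul_prod_erase _ _ hiV, mul_mul_mul_comm, HyperDual.eps_mul_self, zero_mul]

end HD

section HDR
variable (R : Type*) [CommRing R] (n : ℕ)

noncomputable def HyperDual.cR : R →+* HyperDual (FractionRing R) n :=
  (HyperDual.C (FractionRing R) n).comp (algebraMap R (FractionRing R))

lemma HyperDual.cR_mem (r : R) : HyperDual.cR R n r ∈ HyperDual.baseRange R n := by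
  refine ⟨MvPolynomial.C r, ?_⟩
  simp [HyperDual.cR, HyperDual.C, RingHom.comp_apply, MvPolynomial.map_C]

lemma HyperDual.eps_mem (i : Fin n) :
    HyperDual.eps (FractionRing R) n i ∈ HyperDual.baseRange R n := by
  refine ⟨MvPolynomial.X i, ?_⟩
  simp [HyperDual.eps, RingHom.comp_apply, MvPolynomial.map_X]

lemma HyperDual.epsP_mem (T : Finset (Fin n)) :
    HyperDual.epsP (FractionRing R) n T ∈ HyperDual.baseRange R n :=
  Subring.prod_mem _ fun i _ => HyperDual.eps_mem R n i

lemma HyperDual.exists_rep {a : HyperDual (FractionRing R) n}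
    (ha : a ∈ HyperDual.baseRange R n) :
    ∃ c : Finset (Fin n) → R,
      a = ∑ U : Finset (Fin n), HyperDual.cR R n (c U) * HyperDual.epsP (FractionRing R) n U := by
  obtain ⟨q, rfl⟩ := ha
  induction q using MvPolynomial.induction_on' with
  | add p q ihp ihq =>
      obtain ⟨c1, h1⟩ := ihp
      obtain ⟨c2, h2⟩ := ihq
      refine ⟨c1 + c2, ?_⟩
      rw [map_add, h1, h2, ← Finset.sum_add_distrib]
      refine Finset.sum_congr rfl fun U _ => ?_
      simp [map_add, add_mul]
  | monomial d r =>
      have hmon : ((Ideal.Quotient.mk _).comp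
            (MvPolynomial.map (algebraMap R (FractionRing R))))
            (MvPolynomial.monomial d r)
          = HyperDual.cR R n r *
            ∏ i ∈ d.support, HyperDual.eps (FractionRing R) n i ^ d i := by
        rw [MvPolynomial.monomial_eq]
        simp only [RingHom.comp_apply, map_mul, MvPolynomial.map_C]
        rw [Finsupp.prod]
        simp only [map_prod, map_pow, MvPolynomial.map_X]
        rfl
      by_cases hd : ∀ i ∈ d.support, d i = 1
      · refine ⟨fun U => if U = d.support then r else 0, ?_⟩
        rw [hmon]
        have : ∏ i ∈ d.support, HyperDual.eps (FractionRing R) n i ^ d i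
            = HyperDual.epsP (FractionRing R) n d.support :=
          Finset.prod_congr rfl fun i hi => by rw [hd i hi, pow_one]
        rw [this]
        rw [Finset.sum_congr rfl (fun U (_ : U ∈ Finset.univ) => by
          rw [show (HyperDual.cR R n (if U = d.support then r else 0) *
              HyperDual.epsP (FractionRing R) n U)
            = if U = d.support then
                HyperDual.cR R n r * HyperDual.epsP (FractionRing R) n U else 0 by
            split <;> simp [*]])]
        rw [Finset.sum_ite_eq' Finset.univ d.support
          (fun U => HyperDual.cR R n r * HyperDual.epsP (FractionRing R) n U)]
        simp
      · push_neg at hd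
        obtain ⟨i, hi, hne⟩ := hd
        have h2le : 2 ≤ d i := by
          have := Finsupp.mem_support_iff.mp hi
          omega
        have hz : HyperDual.eps (FractionRing R) n i ^ d i = 0 := by
          have : HyperDual.eps (FractionRing R) n i ^ d i
              = HyperDual.eps (FractionRing R) n i * HyperDual.eps (FractionRing R) n i *
                HyperDual.eps (FractionRing R) n i ^ (d i - 2) := by
            rw [← pow_two, ← pow_add]
            congr 1
            omega
          rw [this, HyperDual.eps_mul_self, zero_mul]
        refine ⟨0, ?_⟩
        rw [hmon, Finset.prod_eq_zero hi hz, mul_zero]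
        simp

end HDR

section Ident
variable (K : Type*) [CommRing K] (n : ℕ)

lemma HyperDual.eval_add_sum_eps (F : Polynomial (HyperDual K n)) (b : HyperDual K n)
    (T : Finset (Fin n)) :
    F.eval (b + ∑ i ∈ T, HyperDual.eps K n i) =
      ∑ U ∈ T.powerset, (U.card.factorial : HyperDual K n) *
        ((taylor b F).coeff U.card * HyperDual.epsP K n U) := by
  classical
  set g : ℕ → HyperDual K n := fun k =>
    ∑ B ∈ T.powersetCard k, (k.factorial : HyperDual K n) *
      ((taylor b F).coeff k * HyperDual.epsP K n B) with hg
  have hL : F.eval (b + ∑ i ∈ T, HyperDual.eps K n i)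
      = ∑ k ∈ Finset.range (F.natDegree + 1), g k := by
    rw [add_comm, ← taylor_eval,
      Polynomial.eval_eq_sum_range' (by rw [natDegree_taylor]; exact Nat.lt_succ_self _)]
    refine Finset.sum_congr rfl fun k _ => ?_
    rw [sum_pow_of_sq_zero (HyperDual.eps K n) T
      (fun i _ => HyperDual.eps_mul_self K n i) k, Finset.mul_sum, hg]
    refine Finset.sum_congr rfl fun B _ => ?_
    simp only [HyperDual.epsP]
    ring
  have hR : (∑ U ∈ T.powerset, (U.card.factorial : HyperDual K n) *
        ((taylor b F).coeff U.card * HyperDual.epsP K n U))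
      = ∑ k ∈ Finset.range (T.card + 1), g k := by
    rw [Finset.sum_powerset]
    refine Finset.sum_congr rfl fun k _ => Finset.sum_congr rfl fun B hB => ?_
    rw [(Finset.mem_powersetCard.mp hB).2]
  rw [hL, hR]
  have hzero1 : ∀ k, F.natDegree + 1 ≤ k → g k = 0 := by
    intro k hk
    refine Finset.sum_eq_zero fun B _ => ?_
    rw [Polynomial.coeff_eq_zero_of_natDegree_lt (by rw [natDegree_taylor]; omega)]
    simp
  have hzero2 : ∀ k, T.card + 1 ≤ k → g k = 0 := by
    intro k hk
    rw [hg]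
    dsimp only
    rw [Finset.powersetCard_eq_empty.mpr (by omega), Finset.sum_empty]
  trans ∑ k ∈ Finset.range (max (F.natDegree + 1) (T.card + 1)), g k
  · refine Finset.sum_subset (Finset.range_subset_range.mpr (le_max_left _ _)) fun k hk hk' => ?_
    refine hzero1 k ?_
    simp only [Finset.mem_range] at hk hk'
    omega
  · refine (Finset.sum_subset (Finset.range_subset_range.mpr (le_max_right _ _)) fun k hk hk' => ?_).symm
    refine hzero2 k ?_
    simp only [Finset.mem_range] at hk hk'
    omega

end Ident

lemma HyperDual.prod_gen (R : Type*) [CommRing R] (n : ℕ) (c : Finset (Fin n) → R)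
    (B : Finset (Finset (Fin n))) (hne : ∀ U ∈ B, U ≠ ∅) :
    (∏ U ∈ B, HyperDual.cR R n (c U) * HyperDual.epsP (FractionRing R) n U) = 0 ∨
    ∃ (r : R) (V : Finset (Fin n)), B.card ≤ V.card ∧
      (∏ U ∈ B, HyperDual.cR R n (c U) * HyperDual.epsP (FractionRing R) n U)
        = HyperDual.cR R n r * HyperDual.epsP (FractionRing R) n V := by
  classical
  induction B using Finset.induction_on with
  | empty =>
      right
      exact ⟨1, ∅, by simp, by simp [HyperDual.epsP_empty]⟩
  | insert U0 B hU0 ih =>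
      rw [Finset.prod_insert hU0]
      rcases ih (fun U hU => hne U (Finset.mem_insert_of_mem hU)) with h0 | ⟨r, V, hcard, hEq⟩
      · left; rw [h0, mul_zero]
      · rw [hEq]
        by_cases hd : Disjoint U0 V
        · right
          refine ⟨c U0 * r, U0 ∪ V, ?_, ?_⟩
          · rw [Finset.card_insert_of_notMem hU0, Finset.card_union_of_disjoint hd]
            have h1 : 1 ≤ U0.card := Finset.card_pos.mpr
              (Finset.nonempty_iff_ne_empty.mpr (hne U0 (Finset.mem_insert_self _ _)))
            omega
          · rw [← HyperDual.epsP_mul_of_disjoint _ _ hd, map_mul]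
            ring
        · left
          rw [show (HyperDual.cR R n (c U0) * HyperDual.epsP (FractionRing R) n U0) *
              (HyperDual.cR R n r * HyperDual.epsP (FractionRing R) n V)
            = (HyperDual.cR R n (c U0) * HyperDual.cR R n r) *
              (HyperDual.epsP (FractionRing R) n U0 * HyperDual.epsP (FractionRing R) n V) by
              ring,
            HyperDual.epsP_mul_of_not_disjoint _ _ hd, mul_zero]

/-- A polynomial `F` over `K[ε₁,…,εₙ]` (`K = T(R)`) maps
`A_R = R[ε₁,…,εₙ]` into itself iff `F(x + Σᵢ eᵢεᵢ) ∈ A_R` for all `x ∈ R` and all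
`e₁, …, eₙ ∈ {0,1}`; that is, `R + Σᵢ {0,1}εᵢ` is polynomially dense in `R[ε₁,…,εₙ]`. -/
theorem hyperDual_polynomially_dense (R : Type*) [CommRing R] (n : ℕ) (hn : 0 < n)
    (F : Polynomial (HyperDual (FractionRing R) n)) :
    (∀ a ∈ HyperDual.baseRange R n, F.eval a ∈ HyperDual.baseRange R n)
      ↔ ∀ (x : R) (e : Fin n → Bool),
          F.eval (HyperDual.C (FractionRing R) n (algebraMap R (FractionRing R) x) +
              ∑ i : Fin n, if e i then HyperDual.eps (FractionRing R) n i else 0)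
            ∈ HyperDual.baseRange R n := by
  classical
  constructor
  · intro hall x e
    refine hall _ (Subring.add_mem _ (HyperDual.cR_mem R n x) (Subring.sum_mem _ fun i _ => ?_))
    by_cases he : e i
    · simpa [he] using HyperDual.eps_mem R n i
    · simpa [he] using Subring.zero_mem (HyperDual.baseRange R n)
  · intro H a ha
    obtain ⟨c, rfl⟩ := HyperDual.exists_rep R n ha
    rw [← Finset.add_sum_erase _ _ (Finset.mem_univ (∅ : Finset (Fin n))),
      HyperDual.epsP_empty, mul_one]
    set x := c ∅ with hx
    set η := ∑ U ∈ Finset.univ.erase (∅ : Finset (Fin n)),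
      HyperDual.cR R n (c U) * HyperDual.epsP (FractionRing R) n U with hη
    set G : ℕ → HyperDual (FractionRing R) n :=
      fun k => (taylor (HyperDual.cR R n x) F).coeff k with hG
    have hevmem : ∀ T : Finset (Fin n),
        F.eval (HyperDual.cR R n x + ∑ i ∈ T, HyperDual.eps (FractionRing R) n i)
          ∈ HyperDual.baseRange R n := by
      intro T
      have h := H x fun i => decide (i ∈ T)
      have hsum : (∑ i : Fin n, if decide (i ∈ T) = true
            then HyperDual.eps (FractionRing R) n i else 0)
          = ∑ i ∈ T, HyperDual.eps (FractionRing R) n i := by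
        simp only [decide_eq_true_eq]
        rw [Finset.sum_ite_mem, Finset.univ_inter]
      rw [hsum] at h
      exact h
    have claim1 : ∀ T : Finset (Fin n),
        (T.card.factorial : HyperDual (FractionRing R) n) *
          (G T.card * HyperDual.epsP (FractionRing R) n T) ∈ HyperDual.baseRange R n := by
      intro T
      induction T using Finset.strongInduction with
      | _ T ih =>
        have key := HyperDual.eval_add_sum_eps (FractionRing R) n F (HyperDual.cR R n x) T
        rw [← Finset.add_sum_erase _ _ (Finset.mem_powerset_self T)] at key
        have heq : (T.card.factorial : HyperDual (FractionRing R) n) *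
              (G T.card * HyperDual.epsP (FractionRing R) n T)
            = F.eval (HyperDual.cR R n x + ∑ i ∈ T, HyperDual.eps (FractionRing R) n i)
              - ∑ U ∈ T.powerset.erase T, (U.card.factorial : HyperDual (FractionRing R) n) *
                  ((taylor (HyperDual.cR R n x) F).coeff U.card *
                    HyperDual.epsP (FractionRing R) n U) := by
          rw [key, hG]
          ring
        rw [heq]
        refine Subring.sub_mem _ (hevmem T) (Subring.sum_mem _ fun U hU => ?_)
        have hUT : U ⊂ T := by
          rcases Finset.mem_erase.mp hU with ⟨hne', hmem⟩
          exact Finset.ssubset_iff_subset_ne.mpr ⟨Finset.mem_powerset.mp hmem, hne'⟩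
        exact ih U hUT
    have claim2 : ∀ (k : ℕ) (V : Finset (Fin n)), k ≤ V.card →
        (k.factorial : HyperDual (FractionRing R) n) *
          (G k * HyperDual.epsP (FractionRing R) n V) ∈ HyperDual.baseRange R n := by
      intro k V hk
      obtain ⟨U, hUV, hUcard⟩ := Finset.exists_subset_card_eq hk
      have hd : Disjoint U (V \ U) := Finset.disjoint_sdiff
      have hun : U ∪ (V \ U) = V := Finset.union_sdiff_of_subset hUV
      have hVsplit : HyperDual.epsP (FractionRing R) n V
          = HyperDual.epsP (FractionRing R) n U * HyperDual.epsP (FractionRing R) n (V \ U) := by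
        rw [HyperDual.epsP_mul_of_disjoint _ _ hd, hun]
      rw [hVsplit, show (k.factorial : HyperDual (FractionRing R) n) *
          (G k * (HyperDual.epsP (FractionRing R) n U * HyperDual.epsP (FractionRing R) n (V \ U)))
        = ((k.factorial : HyperDual (FractionRing R) n) *
            (G k * HyperDual.epsP (FractionRing R) n U)) *
            HyperDual.epsP (FractionRing R) n (V \ U) by ring]
      have h1 := claim1 U
      rw [hUcard] at h1
      exact Subring.mul_mem _ h1 (HyperDual.epsP_mem R n _)
    rw [show HyperDual.cR R n x + η = η + HyperDual.cR R n x from add_comm _ _, ← taylor_eval,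
      Polynomial.eval_eq_sum_range' (n := F.natDegree + 1)
        (by rw [natDegree_taylor]; exact Nat.lt_succ_self _)]
    refine Subring.sum_mem _ fun k _ => ?_
    have hsq : ∀ U ∈ Finset.univ.erase (∅ : Finset (Fin n)),
        (HyperDual.cR R n (c U) * HyperDual.epsP (FractionRing R) n U) *
          (HyperDual.cR R n (c U) * HyperDual.epsP (FractionRing R) n U) = 0 := by
      intro U hU
      have hUne : U ≠ ∅ := (Finset.mem_erase.mp hU).1
      have hnd : ¬ Disjoint U U := fun h => hUne (by simpa using disjoint_self.mp h)
      rw [mul_mul_mul_comm, HyperDual.epsP_mul_of_not_disjoint _ _ hnd, mul_zero]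
    rw [hη, sum_pow_of_sq_zero _ _ hsq k, Finset.mul_sum]
    refine Subring.sum_mem _ fun B hB => ?_
    obtain ⟨hBsub, hBcard⟩ := Finset.mem_powersetCard.mp hB
    have hBne : ∀ U ∈ B, U ≠ ∅ := fun U hU => (Finset.mem_erase.mp (hBsub hU)).1
    rcases HyperDual.prod_gen R n c B hBne with h0 | ⟨r, V, hcard, hEq⟩
    · rw [h0]
      simpa using Subring.zero_mem (HyperDual.baseRange R n)
    · rw [hEq, show (taylor (HyperDual.cR R n x) F).coeff k *
          ((k.factorial : HyperDual (FractionRing R) n) *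
            (HyperDual.cR R n r * HyperDual.epsP (FractionRing R) n V))
        = HyperDual.cR R n r * ((k.factorial : HyperDual (FractionRing R) n) *
            ((taylor (HyperDual.cR R n x) F).coeff k * HyperDual.epsP (FractionRing R) n V)) by
          ring]
      exact Subring.mul_mem _ (HyperDual.cR_mem R n r) (claim2 k V (by omega))
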